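/- Let ε > 0 and (a, b) ∈ ℝ². The open ball {p ∈ ℝ² : N(p − (a, b)) < ε} for the norm N(u, v) = |v − u| + |u + v|/2 equals the open parallelogram given by the interior of the convex hull of the four points A₁ = (a − ε, b − ε), A₂ = (a + ε/2, b − ε/2), A₃ = (a + ε, b + ε), A₄ = (a − ε/2, b + ε/2). -/

import Mathlib

noncomputable def N (p : ℝ × ℝ) : ℝ := |p.2 - p.1| + |p.1 + p.2| / 2

lemma N_cont : Continuous N := by unfold N; continuity

lemma N_nonneg (p : ℝ × ℝ) : 0 ≤ N p := by unfold N; positivity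

lemma N_smul (s : ℝ) (p : ℝ × ℝ) : N (s • p) = |s| * N p := by
  simp only [N, Prod.smul_fst, Prod.smul_snd, smul_eq_mul]
  rw [show s * p.2 - s * p.1 = s * (p.2 - p.1) by ring,
    show s * p.1 + s * p.2 = s * (p.1 + p.2) by ring, abs_mul, abs_mul]
  ring

lemma N_comb {s t : ℝ} (hs : 0 ≤ s) (ht : 0 ≤ t) (p q : ℝ × ℝ) :
    N (s • p + t • q) ≤ s * N p + t * N q := by
  simp only [N, Prod.smul_fst, Prod.smul_snd, smul_eq_mul, Prod.fst_add, Prod.snd_add]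
  have h1 : |s * p.2 + t * q.2 - (s * p.1 + t * q.1)| ≤ s * |p.2 - p.1| + t * |q.2 - q.1| := by
    rw [show s * p.2 + t * q.2 - (s * p.1 + t * q.1) = s * (p.2 - p.1) + t * (q.2 - q.1) by ring]
    calc _ ≤ |s * (p.2 - p.1)| + |t * (q.2 - q.1)| := abs_add_le _ _
    _ = _ := by rw [abs_mul, abs_mul, abs_of_nonneg hs, abs_of_nonneg ht]
  have h2 : |s * p.1 + t * q.1 + (s * p.2 + t * q.2)| ≤ s * |p.1 + p.2| + t * |q.1 + q.2| := by
    rw [show s * p.1 + t * q.1 + (s * p.2 + t * q.2) = s * (p.1 + p.2) + t * (q.1 + q.2) by ring]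
    calc _ ≤ |s * (p.1 + p.2)| + |t * (q.1 + q.2)| := abs_add_le _ _
    _ = _ := by rw [abs_mul, abs_mul, abs_of_nonneg hs, abs_of_nonneg ht]
  linarith

lemma maxsub (x : ℝ) : max x 0 - max (-x) 0 = x := by
  rcases le_total x 0 with h | h
  · rw [max_eq_right h, max_eq_left (neg_nonneg.mpr h)]; ring
  · rw [max_eq_left h, max_eq_right (neg_nonpos.mpr h)]; ring

lemma maxadd (x : ℝ) : max x 0 + max (-x) 0 = |x| := by
  rcases le_total x 0 with h | h
  · rw [abs_of_nonpos h]; simp [max_eq_right h, max_eq_left (neg_nonneg.mpr h)]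
  · rw [abs_of_nonneg h]; simp [max_eq_left h, max_eq_right (neg_nonpos.mpr h)]

set_option maxHeartbeats 1000000 in
theorem stmt5 (ε : ℝ) (hε : 0 < ε) (a b : ℝ) :
    {p : ℝ × ℝ | N (p - (a, b)) < ε} =
      interior (convexHull ℝ
        ({(a - ε, b - ε), (a + ε / 2, b - ε / 2), (a + ε, b + ε), (a - ε / 2, b + ε / 2)} :
          Set (ℝ × ℝ))) := by
  have hεne : ε ≠ 0 := hε.ne'
  set V : Set (ℝ × ℝ) :=
    {(a - ε, b - ε), (a + ε / 2, b - ε / 2), (a + ε, b + ε), (a - ε / 2, b + ε / 2)} with hV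
  -- the closed ball is convex
  have hCconv : Convex ℝ {p : ℝ × ℝ | N (p - (a, b)) ≤ ε} := by
    intro x hx y hy s t hs ht hst
    simp only [Set.mem_setOf_eq] at *
    have heq : s • x + t • y - (a, b) = s • (x - (a, b)) + t • (y - (a, b)) := by
      apply Prod.ext
      · simp only [Prod.fst_sub, Prod.fst_add, Prod.smul_fst, smul_eq_mul]
        linear_combination a * hst
      · simp only [Prod.snd_sub, Prod.snd_add, Prod.smul_snd, smul_eq_mul]
        linear_combination b * hst
    rw [heq]
    calc N _ ≤ s * N (x - (a, b)) + t * N (y - (a, b)) := N_comb hs ht _ _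
    _ ≤ s * ε + t * ε := add_le_add (mul_le_mul_of_nonneg_left hx hs)
        (mul_le_mul_of_nonneg_left hy ht)
    _ = ε := by rw [← add_mul, hst, one_mul]
  -- the hull is inside the closed ball
  have hHC : convexHull ℝ V ⊆ {p : ℝ × ℝ | N (p - (a, b)) ≤ ε} := by
    apply convexHull_min _ hCconv
    intro q hq
    simp only [hV, Set.mem_insert_iff, Set.mem_singleton_iff] at hq
    rcases hq with rfl | rfl | rfl | rfl <;>
      simp only [Set.mem_setOf_eq, N, Prod.fst_sub, Prod.snd_sub]
    · rw [show b - ε - b - (a - ε - a) = (0:ℝ) by ring,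
        show a - ε - a + (b - ε - b) = -(2*ε) by ring, abs_zero, abs_neg,
        abs_of_nonneg (by positivity)]
      linarith
    · rw [show b - ε/2 - b - (a + ε/2 - a) = -ε by ring,
        show a + ε/2 - a + (b - ε/2 - b) = (0:ℝ) by ring, abs_zero, abs_neg,
        abs_of_nonneg hε.le]
      linarith
    · rw [show b + ε - b - (a + ε - a) = (0:ℝ) by ring,
        show a + ε - a + (b + ε - b) = 2*ε by ring, abs_zero,
        abs_of_nonneg (by positivity)]
      linarith
    · rw [show b + ε/2 - b - (a - ε/2 - a) = ε by ring,
        show a - ε/2 - a + (b + ε/2 - b) = (0:ℝ) by ring, abs_zero,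
        abs_of_nonneg hε.le]
      linarith
  -- the open ball is open
  have hSopen : IsOpen {p : ℝ × ℝ | N (p - (a, b)) < ε} :=
    isOpen_lt (N_cont.comp (continuous_id.sub continuous_const)) continuous_const
  -- the open ball is inside the hull
  have hSH : {p : ℝ × ℝ | N (p - (a, b)) < ε} ⊆ convexHull ℝ V := by
    intro p hp
    simp only [Set.mem_setOf_eq, N, Prod.fst_sub, Prod.snd_sub] at hp
    set x : ℝ := p.2 - b - (p.1 - a) with hx
    set y : ℝ := (p.1 - a + (p.2 - b)) / 2 with hy
    have hxy : |x| + |y| < ε := by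
      have h : |y| = |p.1 - a + (p.2 - b)| / 2 := by
        rw [hy, abs_div]; norm_num
      rw [h]; exact hp
    set s : ℝ := 1 - (|x| + |y|) / ε with hs
    have hs0 : 0 ≤ s := by
      rw [hs]
      have : (|x| + |y|) / ε ≤ 1 := by
        rw [div_le_one hε]; linarith
      linarith
    have hsε : s * ε = ε - (|x| + |y|) := by
      rw [hs]; field_simp
    have hwsum' : max (-y) 0 + max (-x) 0 + max y 0 + max x 0 + s * ε = ε := by
      rw [hsε]; linarith [maxadd x, maxadd y]
    set w : Fin 4 → ℝ := ![max (-y) 0 / ε + s / 2, max (-x) 0 / ε,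
      max y 0 / ε + s / 2, max x 0 / ε] with hw
    set z : Fin 4 → ℝ × ℝ := ![(a - ε, b - ε), (a + ε / 2, b - ε / 2), (a + ε, b + ε),
      (a - ε / 2, b + ε / 2)] with hz
    have hm : ∀ u : ℝ, (0:ℝ) ≤ max u 0 / ε := fun u => div_nonneg (le_max_right _ _) hε.le
    have hw0 : ∀ i ∈ Finset.univ, 0 ≤ w i := by
      intro i _
      fin_cases i
      · exact add_nonneg (hm (-y)) (div_nonneg hs0 (by norm_num))
      · exact hm (-x)
      · exact add_nonneg (hm y) (div_nonneg hs0 (by norm_num))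
      · exact hm x
    have hw1 : ∑ i, w i = 1 := by
      simp only [Fin.sum_univ_four, hw, Matrix.cons_val_zero, Matrix.cons_val_one,
        Matrix.head_cons, Matrix.cons_val_two, Matrix.tail_cons, Matrix.cons_val_three]
      have hinv : ε * ε⁻¹ = 1 := mul_inv_cancel₀ hεne
      linear_combination ε⁻¹ * hwsum' + (1 - s) * hinv
    have hzmem : ∀ i ∈ Finset.univ, z i ∈ convexHull ℝ V := by
      intro i _
      apply subset_convexHull
      fin_cases i <;> simp [hz, hV]
    have hsum := (convex_convexHull ℝ V).sum_mem hw0 hw1 hzmem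
    have hps : p = ∑ i, w i • z i := by
      have hux := maxsub x
      have huy := maxsub y
      rw [Fin.sum_univ_four]
      simp only [hw, hz, Matrix.cons_val_zero, Matrix.cons_val_one, Matrix.head_cons,
        Matrix.cons_val_two, Matrix.tail_cons, Matrix.cons_val_three,
        Prod.smul_mk, smul_eq_mul, Prod.mk_add_mk]
      apply Prod.ext
      · simp only
        have hxeq : p.1 = a + (y - x / 2) := by rw [hx, hy]; ring
        rw [hxeq]
        have hinv : ε * ε⁻¹ = 1 := mul_inv_cancel₀ hεne
        linear_combination (-a*ε⁻¹) * hwsum' + (-a*(1-s) - y + x/2) * hinv - (ε*ε⁻¹) * huy + (ε*ε⁻¹/2) * hux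
      · simp only
        have hyeq : p.2 = b + (y + x / 2) := by rw [hx, hy]; ring
        rw [hyeq]
        have hinv : ε * ε⁻¹ = 1 := mul_inv_cancel₀ hεne
        linear_combination (-b*ε⁻¹) * hwsum' + (-b*(1-s) - y - x/2) * hinv - (ε*ε⁻¹) * huy - (ε*ε⁻¹/2) * hux
    rw [hps]; exact hsum
  -- conclude
  apply Set.Subset.antisymm (interior_maximal hSH hSopen)
  intro p hp
  have hple : N (p - (a, b)) ≤ ε := hHC (interior_subset hp)
  simp only [Set.mem_setOf_eq]
  rcases eq_or_ne (N (p - (a, b))) 0 with h0 | h0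
  · rw [h0]; exact hε
  have hrpos : 0 < N (p - (a, b)) := lt_of_le_of_ne (N_nonneg _) (Ne.symm h0)
  have hpne : p - (a, b) ≠ 0 := by
    intro h
    rw [h] at h0
    exact h0 (by simp [N])
  have hnorm : 0 < ‖p - (a, b)‖ := norm_pos_iff.mpr hpne
  obtain ⟨δ, hδ, hball⟩ := Metric.isOpen_iff.mp isOpen_interior p hp
  set t : ℝ := δ / (2 * ‖p - (a, b)‖) with ht
  have ht0 : 0 < t := by positivity
  set q : ℝ × ℝ := p + t • (p - (a, b)) with hq
  have hqball : q ∈ Metric.ball p δ := by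
    rw [Metric.mem_ball, dist_eq_norm, hq]
    rw [show p + t • (p - (a, b)) - p = t • (p - (a, b)) by abel]
    rw [norm_smul, Real.norm_eq_abs, abs_of_pos ht0, ht]
    rw [div_mul_eq_mul_div, mul_comm]
    rw [div_lt_iff₀ (by positivity)]
    nlinarith [mul_pos hδ hnorm]
  have hqle : N (q - (a, b)) ≤ ε := hHC (interior_subset (hball hqball))
  have hqeq : q - (a, b) = (1 + t) • (p - (a, b)) := by
    rw [hq, add_smul, one_smul]; abel
  rw [hqeq, N_smul, abs_of_pos (by linarith)] at hqle
  nlinarith [mul_pos ht0 hrpos]
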